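/- Let X := {2^{2^k} : k ∈ ℕ, k ≥ 1} ⊆ ℝ, let ρ(x,y) := |x−y|, let μ := Σ_{k=1}^∞ 2^k·δ_{2^{2^k}}, and let f := 𝟏_{{4}} be the indicator function of the point 4 = 2^{2^1}. Then: (a) ∫_X |f|² dμ = 2, so ‖f‖_{L²(X,μ)} = √2 ∈ (0,∞); (b) for every s ∈ (0,1), I(s) := ∫_X (∫_X |f(x)−f(y)|/(U(x,y)·ρ(x,y)^s) dμ(y))² dμ(x) < ∞; and (c) lim_{s→0⁺} s²·I(s) = 0. -/

import Mathlib

noncomputable section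

open MeasureTheory Filter Set
open scoped ENNReal NNReal Topology

namespace Paper

/-- The measure `μ = Σ_{k ≥ 1} 2^k δ_{2^{2^k}}` on `ℝ` (indexed below by `k+1`, `k : ℕ`). -/
def μX : Measure ℝ :=
  Measure.sum fun k : ℕ => ((2 : ℝ≥0∞) ^ (k + 1)) • Measure.dirac ((2 : ℝ) ^ 2 ^ (k + 1))

/-- `U(x,y) := min{μ(B(x,|x-y|)), μ(B(y,|x-y|))}`. -/
def UX (x y : ℝ) : ℝ≥0∞ :=
  min (μX (Metric.ball x |x - y|)) (μX (Metric.ball y |x - y|))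

/-- `f = 𝟏_{{4}}`, the indicator of the point `4 = 2^{2^1}`. -/
def fX : ℝ → ℝ := ({(4 : ℝ)} : Set ℝ).indicator fun _ => 1

/-- `I(s) = ∫_X (∫_X |f(x)-f(y)| / (U(x,y) |x-y|^s) dμ(y))² dμ(x)`. -/
def IX (s : ℝ) : ℝ≥0∞ :=
  ∫⁻ x, (∫⁻ y, ENNReal.ofReal |fX x - fX y| /
      (UX x y * ENNReal.ofReal |x - y| ^ s) ∂μX) ^ 2 ∂μX

/-! ### Auxiliary definitions and lemmas -/

/-- The atoms of the measure `μX`. -/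
def pX (k : ℕ) : ℝ := 2 ^ 2 ^ (k + 1)

lemma pX_strictMono : StrictMono pX := fun k l h =>
  pow_lt_pow_right₀ one_lt_two (Nat.pow_lt_pow_right one_lt_two (by omega))

lemma pX_zero : pX 0 = 4 := by norm_num [pX]

lemma four_lt_pX (k : ℕ) : 4 < pX (k + 1) := by
  have := pX_strictMono (Nat.succ_pos k)
  rwa [pX_zero] at this

lemma pX_sub_ge (k : ℕ) : (2 : ℝ) ^ 2 ^ (k + 1) ≤ pX (k + 1) - 4 := by
  have h2 : (2 : ℕ) ≤ 2 ^ (k + 1) := by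
    calc (2 : ℕ) = 2 ^ 1 := rfl
    _ ≤ 2 ^ (k + 1) := Nat.pow_le_pow_right (by norm_num) (by omega)
  have hx2 : (2 : ℝ) ≤ 2 ^ 2 ^ (k + 1) := by
    calc (2 : ℝ) = 2 ^ 1 := (pow_one 2).symm
    _ ≤ 2 ^ 2 ^ (k + 1) := pow_le_pow_right₀ one_le_two Nat.one_le_two_pow
  have h1 : (2 : ℝ) ^ 2 ^ (k + 1) * 4 ≤ pX (k + 1) := by
    have he : 2 ^ (k + 1) + 2 ≤ 2 ^ (k + 1 + 1) := by
      rw [pow_succ]; omega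
    calc (2 : ℝ) ^ 2 ^ (k + 1) * 4 = 2 ^ (2 ^ (k + 1) + 2) := by
          rw [pow_add]; ring
    _ ≤ 2 ^ 2 ^ (k + 1 + 1) := pow_le_pow_right₀ one_le_two he
    _ = pX (k + 1) := rfl
  nlinarith

/-- Integration against `μX` is a weighted sum over the atoms. -/
lemma lintegral_μX (g : ℝ → ℝ≥0∞) :
    ∫⁻ x, g x ∂μX = ∑' k : ℕ, (2 : ℝ≥0∞) ^ (k + 1) * g (pX k) := by
  rw [μX, lintegral_sum_measure]
  congr 1
  funext k
  rw [lintegral_smul_measure, lintegral_dirac]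
  rfl

lemma le_μX {S : Set ℝ} (hS : MeasurableSet S) {j : ℕ} (h : pX j ∈ S) :
    (2 : ℝ≥0∞) ^ (j + 1) ≤ μX S := by
  have hsum : μX S = ∑' k : ℕ, (2 : ℝ≥0∞) ^ (k + 1) * Measure.dirac (pX k) S := by
    rw [μX, Measure.sum_apply _ hS]
    simp [pX]
  rw [hsum]
  refine le_trans ?_ (ENNReal.le_tsum j)
  rw [Measure.dirac_apply' _ hS, Set.indicator_of_mem h]
  simp

lemma UX_comm (x y : ℝ) : UX x y = UX y x := by
  rw [UX, UX, abs_sub_comm, min_comm]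

lemma le_UX (k : ℕ) : (2 : ℝ≥0∞) ^ (k + 1) ≤ UX (pX (k + 1)) (pX 0) := by
  have h4 : 4 < pX (k + 1) := four_lt_pX k
  have habs : |pX (k + 1) - pX 0| = pX (k + 1) - 4 := by
    rw [pX_zero, abs_of_pos]; linarith
  rw [UX, habs]
  refine le_min ?_ ?_
  · refine le_trans ?_ (le_μX measurableSet_ball
      (Metric.mem_ball_self (by linarith : (0:ℝ) < pX (k + 1) - 4)) (j := k + 1))
    exact pow_le_pow_right₀ one_le_two (by omega)
  · refine le_μX measurableSet_ball ?_ (j := k)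
    rw [Metric.mem_ball, Real.dist_eq, pX_zero]
    rcases k with _ | m
    · rw [pX_zero]; simp; linarith
    · have h1 : 4 < pX (m + 1) := four_lt_pX m
      have h2 : pX (m + 1) < pX (m + 2) := pX_strictMono (by omega)
      rw [abs_of_pos (by linarith)]
      linarith

lemma fX_pX_zero : fX (pX 0) = 1 := by
  rw [pX_zero]; simp [fX]

lemma fX_pX_succ (k : ℕ) : fX (pX (k + 1)) = 0 := by
  have := four_lt_pX k
  exact Set.indicator_of_notMem (by simp only [Set.mem_singleton_iff]; intro h; linarith) _

/-- The inner integral. -/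
def innX (s x : ℝ) : ℝ≥0∞ :=
  ∫⁻ y, ENNReal.ofReal |fX x - fX y| / (UX x y * ENNReal.ofReal |x - y| ^ s) ∂μX

lemma IX_eq (s : ℝ) : IX s = ∑' k : ℕ, (2 : ℝ≥0∞) ^ (k + 1) * innX s (pX k) ^ 2 :=
  lintegral_μX fun x => innX s x ^ 2

lemma innX_eq (s x : ℝ) :
    innX s x = ∑' j : ℕ, (2 : ℝ≥0∞) ^ (j + 1) *
      (ENNReal.ofReal |fX x - fX (pX j)| /
        (UX x (pX j) * ENNReal.ofReal |x - pX j| ^ s)) :=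
  lintegral_μX _

/-- The comparison series. -/
def TT (s : ℝ) : ℝ≥0∞ := ∑' j : ℕ, ((2 : ℝ≥0∞) ^ (s * 2 ^ (j + 1) : ℝ))⁻¹

lemma core (s : ℝ) (hs : 0 ≤ s) (j : ℕ) {A : ℝ≥0∞} (hA : (2 : ℝ≥0∞) ^ (j + 1) ≤ A)
    {r : ℝ} (hr : (2 : ℝ) ^ 2 ^ (j + 1) ≤ r) :
    (2 : ℝ≥0∞) ^ (j + 2) * (ENNReal.ofReal 1 / (A * ENNReal.ofReal r ^ s)) ≤
      2 * ((2 : ℝ≥0∞) ^ (s * 2 ^ (j + 1) : ℝ))⁻¹ := by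
  have hR : (2 : ℝ≥0∞) ^ (s * 2 ^ (j + 1) : ℝ) ≤ ENNReal.ofReal r ^ s := by
    have h1 : ((2 : ℝ≥0∞) ^ (2 ^ (j + 1) : ℕ)) ≤ ENNReal.ofReal r := by
      calc ((2 : ℝ≥0∞) ^ (2 ^ (j + 1) : ℕ)) = ENNReal.ofReal ((2 : ℝ) ^ (2 ^ (j + 1) : ℕ)) := by
            rw [ENNReal.ofReal_pow (by norm_num)]; norm_num
      _ ≤ ENNReal.ofReal r := ENNReal.ofReal_le_ofReal hr
    calc (2 : ℝ≥0∞) ^ (s * 2 ^ (j + 1) : ℝ)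
        = ((2 : ℝ≥0∞) ^ (((2 : ℕ) ^ (j + 1) : ℕ) : ℝ)) ^ s := by
          rw [← ENNReal.rpow_mul]
          congr 1
          push_cast
          ring
    _ = ((2 : ℝ≥0∞) ^ ((2 : ℕ) ^ (j + 1) : ℕ)) ^ s := by rw [ENNReal.rpow_natCast]
    _ ≤ ENNReal.ofReal r ^ s := ENNReal.rpow_le_rpow h1 hs
  have hD : (2 : ℝ≥0∞) ^ (j + 1) * (2 : ℝ≥0∞) ^ (s * 2 ^ (j + 1) : ℝ) ≤
      A * ENNReal.ofReal r ^ s := mul_le_mul' hA hR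
  have hc : (2 : ℝ≥0∞) ^ (j + 1) * ((2 : ℝ≥0∞) ^ (j + 1))⁻¹ = 1 :=
    ENNReal.mul_inv_cancel (by positivity) (ENNReal.pow_ne_top ENNReal.ofNat_ne_top)
  calc (2 : ℝ≥0∞) ^ (j + 2) * (ENNReal.ofReal 1 / (A * ENNReal.ofReal r ^ s))
      ≤ (2 : ℝ≥0∞) ^ (j + 2) *
        (1 / ((2 : ℝ≥0∞) ^ (j + 1) * (2 : ℝ≥0∞) ^ (s * 2 ^ (j + 1) : ℝ))) := by
        rw [ENNReal.ofReal_one]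
        exact mul_le_mul_right (ENNReal.div_le_div_left hD 1) _
  _ = 2 * ((2 : ℝ≥0∞) ^ (s * 2 ^ (j + 1) : ℝ))⁻¹ := by
        rw [one_div, ENNReal.mul_inv (Or.inl (by positivity))
          (Or.inl (ENNReal.pow_ne_top ENNReal.ofNat_ne_top))]
        calc (2 : ℝ≥0∞) ^ (j + 2) *
              (((2 : ℝ≥0∞) ^ (j + 1))⁻¹ * ((2 : ℝ≥0∞) ^ (s * 2 ^ (j + 1) : ℝ))⁻¹)
            = ((2 : ℝ≥0∞) ^ (j + 1) * ((2 : ℝ≥0∞) ^ (j + 1))⁻¹) *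
              (2 * ((2 : ℝ≥0∞) ^ (s * 2 ^ (j + 1) : ℝ))⁻¹) := by ring
        _ = 2 * ((2 : ℝ≥0∞) ^ (s * 2 ^ (j + 1) : ℝ))⁻¹ := by rw [hc, one_mul]

lemma innX_zero_le (s : ℝ) (hs : 0 ≤ s) : innX s (pX 0) ≤ 2 * TT s := by
  rw [innX_eq, tsum_eq_zero_add' ENNReal.summable]
  have h0 : (2 : ℝ≥0∞) ^ (0 + 1) *
      (ENNReal.ofReal |fX (pX 0) - fX (pX 0)| /
        (UX (pX 0) (pX 0) * ENNReal.ofReal |pX 0 - pX 0| ^ s)) = 0 := by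
    simp
  rw [h0, zero_add, TT, ← ENNReal.tsum_mul_left]
  refine ENNReal.tsum_le_tsum fun j => ?_
  have hnum : |fX (pX 0) - fX (pX (j + 1))| = 1 := by
    rw [fX_pX_zero, fX_pX_succ]; norm_num
  have habs : |pX 0 - pX (j + 1)| = pX (j + 1) - 4 := by
    have := four_lt_pX j
    rw [abs_sub_comm, pX_zero, abs_of_pos]; linarith
  rw [hnum, habs, UX_comm]
  have := core s hs j (le_UX j) (pX_sub_ge j)
  calc (2 : ℝ≥0∞) ^ (j + 1 + 1) *
      (ENNReal.ofReal 1 /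
        (UX (pX (j + 1)) (pX 0) * ENNReal.ofReal (pX (j + 1) - 4) ^ s))
      = (2 : ℝ≥0∞) ^ (j + 2) *
        (ENNReal.ofReal 1 /
          (UX (pX (j + 1)) (pX 0) * ENNReal.ofReal (pX (j + 1) - 4) ^ s)) := by norm_num
  _ ≤ 2 * ((2 : ℝ≥0∞) ^ (s * 2 ^ (j + 1) : ℝ))⁻¹ := this

lemma innX_succ_le (s : ℝ) (hs : 0 ≤ s) (k : ℕ) :
    innX s (pX (k + 1)) ≤ ((2 : ℝ≥0∞) ^ k)⁻¹ := by
  rw [innX_eq, tsum_eq_single 0 ?_]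
  swap
  · intro j hj
    obtain ⟨m, rfl⟩ := Nat.exists_eq_succ_of_ne_zero hj
    rw [fX_pX_succ, fX_pX_succ]
    simp
  · have hnum : |fX (pX (k + 1)) - fX (pX 0)| = 1 := by
      rw [fX_pX_zero, fX_pX_succ]; norm_num
    have h4 : 4 < pX (k + 1) := four_lt_pX k
    have habs : |pX (k + 1) - pX 0| = pX (k + 1) - 4 := by
      rw [pX_zero, abs_of_pos]; linarith
    rw [hnum, habs]
    have hR : (1 : ℝ≥0∞) ≤ ENNReal.ofReal (pX (k + 1) - 4) ^ s := by
      calc (1 : ℝ≥0∞) = 1 ^ s := (ENNReal.one_rpow s).symm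
      _ ≤ ENNReal.ofReal (pX (k + 1) - 4) ^ s := by
          refine ENNReal.rpow_le_rpow ?_ hs
          rw [show (1 : ℝ≥0∞) = ENNReal.ofReal 1 by simp]
          refine ENNReal.ofReal_le_ofReal ?_
          have := pX_sub_ge k
          have h2 : (1 : ℝ) ≤ 2 ^ 2 ^ (k + 1) := one_le_pow₀ one_le_two
          linarith
    have hD : (2 : ℝ≥0∞) ^ (k + 1) * 1 ≤
        UX (pX (k + 1)) (pX 0) * ENNReal.ofReal (pX (k + 1) - 4) ^ s :=
      mul_le_mul' (le_UX k) hR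
    calc (2 : ℝ≥0∞) ^ (0 + 1) *
        (ENNReal.ofReal 1 /
          (UX (pX (k + 1)) (pX 0) * ENNReal.ofReal (pX (k + 1) - 4) ^ s))
        ≤ (2 : ℝ≥0∞) ^ (0 + 1) * (1 / ((2 : ℝ≥0∞) ^ (k + 1) * 1)) := by
          rw [ENNReal.ofReal_one]
          exact mul_le_mul_right (ENNReal.div_le_div_left hD 1) _
    _ = ((2 : ℝ≥0∞) ^ k)⁻¹ := by
          rw [mul_one, one_div, pow_one, pow_succ, mul_comm ((2 : ℝ≥0∞) ^ k) 2,
            ENNReal.mul_inv (Or.inl two_ne_zero) (Or.inl ENNReal.ofNat_ne_top),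
            ← mul_assoc, ENNReal.mul_inv_cancel two_ne_zero ENNReal.ofNat_ne_top, one_mul]

lemma IX_le (s : ℝ) (hs : 0 ≤ s) : IX s ≤ 8 * TT s ^ 2 + 8 := by
  rw [IX_eq, tsum_eq_zero_add' ENNReal.summable]
  have h0 : (2 : ℝ≥0∞) ^ (0 + 1) * innX s (pX 0) ^ 2 ≤ 8 * TT s ^ 2 := by
    calc (2 : ℝ≥0∞) ^ (0 + 1) * innX s (pX 0) ^ 2
        ≤ (2 : ℝ≥0∞) ^ (0 + 1) * (2 * TT s) ^ 2 := by
          gcongr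
          exact innX_zero_le s hs
    _ = 8 * TT s ^ 2 := by ring
  have h1 : (∑' k : ℕ, (2 : ℝ≥0∞) ^ (k + 1 + 1) * innX s (pX (k + 1)) ^ 2) ≤ 8 := by
    have harith : ∀ k : ℕ,
        (2 : ℝ≥0∞) ^ (k + 2) * (((2 : ℝ≥0∞) ^ k)⁻¹) ^ 2 = 4 * (2⁻¹ : ℝ≥0∞) ^ k := by
      intro k
      have hco : ((2 : ℝ≥0∞) * 2⁻¹) ^ k = 1 := by
        rw [ENNReal.mul_inv_cancel two_ne_zero ENNReal.ofNat_ne_top]; exact one_pow k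
      calc (2 : ℝ≥0∞) ^ (k + 2) * (((2 : ℝ≥0∞) ^ k)⁻¹) ^ 2
          = (2 : ℝ≥0∞) ^ (k + 2) * ((2⁻¹ : ℝ≥0∞) ^ k) ^ 2 := by rw [ENNReal.inv_pow]
      _ = ((2 * 2⁻¹ : ℝ≥0∞) ^ k) * (4 * (2⁻¹ : ℝ≥0∞) ^ k) := by rw [mul_pow]; ring
      _ = 4 * (2⁻¹ : ℝ≥0∞) ^ k := by rw [hco, one_mul]
    calc (∑' k : ℕ, (2 : ℝ≥0∞) ^ (k + 1 + 1) * innX s (pX (k + 1)) ^ 2)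
        ≤ ∑' k : ℕ, (2 : ℝ≥0∞) ^ (k + 2) * (((2 : ℝ≥0∞) ^ k)⁻¹) ^ 2 := by
          refine ENNReal.tsum_le_tsum fun k => ?_
          gcongr
          exact innX_succ_le s hs k
    _ = ∑' k : ℕ, 4 * (2⁻¹ : ℝ≥0∞) ^ k := by
          congr 1; funext k; exact harith k
    _ = 8 := by
          rw [ENNReal.tsum_mul_left, ENNReal.tsum_geometric, ENNReal.one_sub_inv_two, inv_inv]
          norm_num
  calc (2 : ℝ≥0∞) ^ (0 + 1) * innX s (pX 0) ^ 2 +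
        ∑' k : ℕ, (2 : ℝ≥0∞) ^ (k + 1 + 1) * innX s (pX (k + 1)) ^ 2
      ≤ 8 * TT s ^ 2 + 8 := add_le_add h0 h1

lemma TT_lt_top (s : ℝ) (hs : 0 < s) : TT s < ∞ := by
  set r : ℝ≥0∞ := ((2 : ℝ≥0∞) ^ (s : ℝ))⁻¹ with hrdef
  have hr1 : r < 1 := by
    rw [hrdef, ENNReal.inv_lt_one]
    have h := ENNReal.rpow_lt_rpow_of_exponent_lt (x := 2) (by norm_num) ENNReal.ofNat_ne_top hs
    simpa using h
  have hterm : ∀ j : ℕ, ((2 : ℝ≥0∞) ^ (s * 2 ^ (j + 1) : ℝ))⁻¹ ≤ r ^ j := by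
    intro j
    rw [hrdef, ← ENNReal.inv_pow]
    refine ENNReal.inv_le_inv' ?_
    have hj : (j : ℝ) ≤ 2 ^ (j + 1) := by
      have h1 : (j : ℕ) < 2 ^ j := Nat.lt_two_pow_self
      have h2 : (2 : ℕ) ^ j ≤ 2 ^ (j + 1) := Nat.pow_le_pow_right (by norm_num) (by omega)
      exact_mod_cast (h1.le.trans h2)
    calc ((2 : ℝ≥0∞) ^ (s : ℝ)) ^ j = (2 : ℝ≥0∞) ^ (s * (j : ℕ) : ℝ) := by
          rw [ENNReal.rpow_mul, ENNReal.rpow_natCast]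
    _ ≤ (2 : ℝ≥0∞) ^ (s * 2 ^ (j + 1) : ℝ) := by
          refine ENNReal.rpow_le_rpow_of_exponent_le one_le_two ?_
          exact mul_le_mul_of_nonneg_left hj hs.le
  calc TT s ≤ ∑' j : ℕ, r ^ j := ENNReal.tsum_le_tsum hterm
  _ = (1 - r)⁻¹ := ENNReal.tsum_geometric r
  _ < ∞ := ENNReal.inv_lt_top.2 (tsub_pos_of_lt hr1)

lemma key (s : ℝ) (hs : 0 ≤ s) (m : ℕ) :
    ENNReal.ofReal s * ((2 : ℝ≥0∞) ^ (s * 2 ^ m : ℝ))⁻¹ ≤ 2 * ((2 : ℝ≥0∞)⁻¹) ^ m := by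
  set x : ℝ := s * 2 ^ m with hxdef
  have hxnn : (0 : ℝ) ≤ x := by positivity
  have hx2 : x ≤ 2 * (2 : ℝ) ^ (x : ℝ) := by
    have hexp := Real.add_one_le_exp (x * Real.log 2)
    have hlog := Real.log_two_gt_d9
    rw [Real.rpow_def_of_pos two_pos, mul_comm (Real.log 2) x]
    nlinarith [hexp, hlog, hxnn,
      mul_nonneg hxnn (by nlinarith : (0:ℝ) ≤ 2 * Real.log 2 - 1)]
  have h2m : (0 : ℝ) < 2 ^ m := by positivity
  have h2x : (0 : ℝ) < (2 : ℝ) ^ (x : ℝ) := Real.rpow_pos_of_pos two_pos x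
  have hreal : s / (2 : ℝ) ^ (x : ℝ) ≤ 2 / 2 ^ m := by
    rw [div_le_div_iff₀ h2x h2m]
    calc s * 2 ^ m = x := hxdef.symm
    _ ≤ 2 * 2 ^ (x : ℝ) := hx2
  have hpow : ((2 : ℝ≥0∞) ^ (x : ℝ)) = ENNReal.ofReal ((2 : ℝ) ^ (x : ℝ)) := by
    rw [← ENNReal.ofReal_rpow_of_pos two_pos, ENNReal.ofReal_ofNat]
  calc ENNReal.ofReal s * ((2 : ℝ≥0∞) ^ (x : ℝ))⁻¹
      = ENNReal.ofReal (s / (2 : ℝ) ^ (x : ℝ)) := by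
        rw [hpow, ← ENNReal.ofReal_inv_of_pos h2x, ← ENNReal.ofReal_mul hs, div_eq_mul_inv]
  _ ≤ ENNReal.ofReal (2 / 2 ^ m) := ENNReal.ofReal_le_ofReal hreal
  _ = 2 * ((2 : ℝ≥0∞)⁻¹) ^ m := by
        rw [ENNReal.ofReal_div_of_pos h2m, ENNReal.ofReal_pow (by norm_num : (0:ℝ) ≤ 2),
          div_eq_mul_inv, ENNReal.inv_pow]
        norm_num

lemma TT_le_one_term (s : ℝ) (hs : 0 ≤ s) (j : ℕ) :
    ((2 : ℝ≥0∞) ^ (s * 2 ^ (j + 1) : ℝ))⁻¹ ≤ 1 := by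
  rw [ENNReal.inv_le_one]
  have h := ENNReal.rpow_le_rpow_of_exponent_le (x := 2) one_le_two
    (by positivity : (0:ℝ) ≤ s * 2 ^ (j + 1))
  simpa using h

lemma tendsto_sTT :
    Tendsto (fun s : ℝ => ENNReal.ofReal s * TT s) (𝓝[>] (0 : ℝ)) (𝓝 0) := by
  rw [ENNReal.tendsto_nhds_zero]
  intro ε hε
  -- choose N with 4 * (2⁻¹)^N ≤ ε/2
  obtain ⟨N, hN⟩ : ∃ N : ℕ, 4 * ((2 : ℝ≥0∞)⁻¹) ^ N ≤ ε / 2 := by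
    have hpow : Tendsto (fun n : ℕ => (4 : ℝ≥0∞) * ((2 : ℝ≥0∞)⁻¹) ^ n) atTop (𝓝 0) := by
      have h := ENNReal.tendsto_pow_atTop_nhds_zero_of_lt_one
        (by simp [ENNReal.inv_lt_one] : ((2 : ℝ≥0∞)⁻¹) < 1)
      simpa using ENNReal.Tendsto.const_mul h (Or.inr (by norm_num : (4:ℝ≥0∞) ≠ ⊤))
    exact ((ENNReal.tendsto_nhds_zero.1 hpow) (ε / 2)
      (ENNReal.half_pos hε.ne')).exists
  have hof : Tendsto (fun s : ℝ => (N : ℝ≥0∞) * ENNReal.ofReal s) (𝓝[>] (0:ℝ)) (𝓝 0) := by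
    have h0 : Tendsto (fun s : ℝ => ENNReal.ofReal s) (𝓝[>] (0:ℝ)) (𝓝 0) := by
      have h : Tendsto ENNReal.ofReal (𝓝 (0:ℝ)) (𝓝 (ENNReal.ofReal 0)) :=
        ENNReal.continuous_ofReal.tendsto 0
      have h2 : (𝓝[>] (0:ℝ)) ≤ 𝓝 (0:ℝ) := nhdsWithin_le_nhds
      simpa using h.mono_left h2
    simpa using ENNReal.Tendsto.const_mul h0 (Or.inr (by simp : (N : ℝ≥0∞) ≠ ⊤))
  filter_upwards [ENNReal.tendsto_nhds_zero.1 hof (ε / 2) (ENNReal.half_pos hε.ne'),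
    self_mem_nhdsWithin] with s h1 h2
  have hs : (0 : ℝ) ≤ s := (Set.mem_Ioi.1 h2).le
  have hmain : ENNReal.ofReal s * TT s ≤ (N : ℝ≥0∞) * ENNReal.ofReal s +
      4 * ((2 : ℝ≥0∞)⁻¹) ^ N := by
    rw [TT, ← ENNReal.tsum_mul_left, ← Summable.sum_add_tsum_nat_add' (f := fun j =>
      ENNReal.ofReal s * ((2 : ℝ≥0∞) ^ (s * 2 ^ (j + 1) : ℝ))⁻¹) (k := N) ENNReal.summable]
    refine add_le_add ?_ ?_
    · calc ∑ j ∈ Finset.range N,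
            ENNReal.ofReal s * ((2 : ℝ≥0∞) ^ (s * 2 ^ (j + 1) : ℝ))⁻¹
          ≤ ∑ j ∈ Finset.range N, ENNReal.ofReal s := by
            refine Finset.sum_le_sum fun j _ => ?_
            calc ENNReal.ofReal s * ((2 : ℝ≥0∞) ^ (s * 2 ^ (j + 1) : ℝ))⁻¹
                ≤ ENNReal.ofReal s * 1 := mul_le_mul_right (TT_le_one_term s hs j) _
            _ = ENNReal.ofReal s := mul_one _
      _ = (N : ℝ≥0∞) * ENNReal.ofReal s := by
            rw [Finset.sum_const, Finset.card_range, nsmul_eq_mul]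
    · calc (∑' j : ℕ, ENNReal.ofReal s * ((2 : ℝ≥0∞) ^ (s * 2 ^ (j + N + 1) : ℝ))⁻¹)
          ≤ ∑' j : ℕ, 2 * ((2 : ℝ≥0∞)⁻¹) ^ (j + N + 1) :=
            ENNReal.tsum_le_tsum fun j => key s hs (j + N + 1)
      _ = ∑' j : ℕ, (2 * ((2 : ℝ≥0∞)⁻¹) ^ (N + 1)) * ((2 : ℝ≥0∞)⁻¹) ^ j := by
            congr 1
            funext j
            have : j + N + 1 = (N + 1) + j := by omega
            rw [this, pow_add]
            ring
      _ = (2 * ((2 : ℝ≥0∞)⁻¹) ^ (N + 1)) * ∑' j : ℕ, ((2 : ℝ≥0∞)⁻¹) ^ j :=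
            ENNReal.tsum_mul_left
      _ = 4 * ((2 : ℝ≥0∞)⁻¹) ^ (N + 1) := by
            rw [ENNReal.tsum_geometric, ENNReal.one_sub_inv_two, inv_inv]
            ring
      _ ≤ 4 * ((2 : ℝ≥0∞)⁻¹) ^ N :=
            mul_le_mul_right
              (pow_le_pow_right_of_le_one' (ENNReal.inv_le_one.2 one_le_two) (Nat.le_succ N)) 4
  calc ENNReal.ofReal s * TT s
      ≤ (N : ℝ≥0∞) * ENNReal.ofReal s + 4 * ((2 : ℝ≥0∞)⁻¹) ^ N := hmain
  _ ≤ ε / 2 + ε / 2 := add_le_add h1 hN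
  _ = ε := ENNReal.add_halves ε

theorem statement10 :
    (∫⁻ x, ENNReal.ofReal |fX x| ^ 2 ∂μX) = 2 ∧
    (∀ s ∈ Set.Ioo (0:ℝ) 1, IX s < ∞) ∧
    Tendsto (fun s : ℝ => ENNReal.ofReal s ^ 2 * IX s) (𝓝[>] (0:ℝ)) (𝓝 0) := by
  refine ⟨?_, ?_, ?_⟩
  · rw [lintegral_μX fun x => ENNReal.ofReal |fX x| ^ 2, tsum_eq_single 0 ?_]
    · rw [fX_pX_zero]; norm_num
    · intro k hk
      obtain ⟨m, rfl⟩ := Nat.exists_eq_succ_of_ne_zero hk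
      rw [fX_pX_succ]
      simp
  · intro s hs
    refine lt_of_le_of_lt (IX_le s hs.1.le) ?_
    have h1 : TT s ^ 2 < ∞ := by
      have := TT_lt_top s hs.1
      exact ENNReal.pow_lt_top this
    rw [ENNReal.add_lt_top]
    exact ⟨ENNReal.mul_lt_top (by norm_num) h1, by norm_num⟩
  · have hb : ∀ᶠ s : ℝ in 𝓝[>] (0:ℝ), ENNReal.ofReal s ^ 2 * IX s ≤
        8 * (ENNReal.ofReal s * TT s) ^ 2 + 8 * ENNReal.ofReal s ^ 2 := by
      filter_upwards [self_mem_nhdsWithin] with s hs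
      calc ENNReal.ofReal s ^ 2 * IX s
          ≤ ENNReal.ofReal s ^ 2 * (8 * TT s ^ 2 + 8) :=
            mul_le_mul_right (IX_le s (Set.mem_Ioi.1 hs).le) _
      _ = 8 * (ENNReal.ofReal s * TT s) ^ 2 + 8 * ENNReal.ofReal s ^ 2 := by ring
    have h0 : Tendsto (fun s : ℝ => ENNReal.ofReal s) (𝓝[>] (0:ℝ)) (𝓝 0) := by
      have h : Tendsto ENNReal.ofReal (𝓝 (0:ℝ)) (𝓝 (ENNReal.ofReal 0)) :=
        ENNReal.continuous_ofReal.tendsto 0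
      have h2 : (𝓝[>] (0:ℝ)) ≤ 𝓝 (0:ℝ) := nhdsWithin_le_nhds
      simpa using h.mono_left h2
    have hlim : Tendsto (fun s : ℝ => 8 * (ENNReal.ofReal s * TT s) ^ 2 +
        8 * ENNReal.ofReal s ^ 2) (𝓝[>] (0:ℝ)) (𝓝 0) := by
      have t1 : Tendsto (fun s : ℝ => 8 * (ENNReal.ofReal s * TT s) ^ 2)
          (𝓝[>] (0:ℝ)) (𝓝 0) := by
        have := ENNReal.Tendsto.pow tendsto_sTT (n := 2)
        simpa using ENNReal.Tendsto.const_mul this (Or.inr (by norm_num : (8:ℝ≥0∞) ≠ ⊤))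
      have t2 : Tendsto (fun s : ℝ => 8 * ENNReal.ofReal s ^ 2) (𝓝[>] (0:ℝ)) (𝓝 0) := by
        have := ENNReal.Tendsto.pow h0 (n := 2)
        simpa using ENNReal.Tendsto.const_mul this (Or.inr (by norm_num : (8:ℝ≥0∞) ≠ ⊤))
      simpa using t1.add t2
    refine tendsto_of_tendsto_of_tendsto_of_le_of_le' tendsto_const_nhds hlim ?_ hb
    filter_upwards with s using zero_le

end Paper
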